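/- Let n ≥ 2, α₀ an invertible real n×n matrix, x* ∈ ℝ^n, Δᴮ : ℝ^{n−1} → ℝ^n a function, ż ∈ ℝ^{n−1}, R an invertible real (n−1)×(n−1) matrix, ρ ≥ 0, and M₁, …, M_k ∈ ℝ^{n×(n−1)} with k ≥ 1. Suppose that for every z ∈ ℝ^{n−1} with ‖R(z − ż)‖₂ ≤ ρ there exists M in the convex hull of {M₁, …, M_k} such that Δᴮ(z) − Δᴮ(ż) = M(z − ż). Then for every z with ‖R(z − ż)‖₂ ≤ ρ, ‖α₀(Δᴮ(z) − x*)‖₂ ≤ ‖α₀(Δᴮ(ż) − x*)‖₂ + (max_{1≤j≤k} ‖α₀ M_j R⁻¹‖_{2→2}) · ρ. -/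

import Mathlib

open Matrix

/-- Euclidean norm of a vector in `ℝ^n`. -/
noncomputable def enorm2 {n : ℕ} (v : Fin n → ℝ) : ℝ := Real.sqrt (∑ i, v i ^ 2)

/-- The `ℓ₂ → ℓ₂` induced operator norm of a real matrix. -/
noncomputable def opNorm2 {m n : ℕ} (A : Matrix (Fin m) (Fin n) ℝ) : ℝ :=
  ‖LinearMap.toContinuousLinearMap (Matrix.toEuclideanLin A)‖


lemma enorm2_eq {n : ℕ} (v : Fin n → ℝ) :
    enorm2 v = ‖(WithLp.equiv 2 (Fin n → ℝ)).symm v‖ := by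
  simp [enorm2, EuclideanSpace.norm_eq, sq_abs]

lemma enorm2_nonneg {n : ℕ} (v : Fin n → ℝ) : 0 ≤ enorm2 v := Real.sqrt_nonneg _

lemma opNorm2_nonneg {m n : ℕ} (A : Matrix (Fin m) (Fin n) ℝ) : 0 ≤ opNorm2 A :=
  norm_nonneg _

lemma enorm2_mulVec_le {m n : ℕ} (A : Matrix (Fin m) (Fin n) ℝ) (v : Fin n → ℝ) :
    enorm2 (A.mulVec v) ≤ opNorm2 A * enorm2 v := by
  rw [enorm2_eq, enorm2_eq]
  exact (LinearMap.toContinuousLinearMap (Matrix.toEuclideanLin A)).le_opNorm ((WithLp.equiv 2 (Fin n → ℝ)).symm v)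

lemma enorm2_add_le {n : ℕ} (a b : Fin n → ℝ) : enorm2 (a + b) ≤ enorm2 a + enorm2 b := by
  simp only [enorm2_eq, map_add]
  exact norm_add_le _ _

lemma opNorm2_convex {m n : ℕ} (X Y : Matrix (Fin m) (Fin n) ℝ) {a b : ℝ}
    (ha : 0 ≤ a) (hb : 0 ≤ b) :
    opNorm2 (a • X + b • Y) ≤ a * opNorm2 X + b * opNorm2 Y := by
  unfold opNorm2
  rw [map_add, _root_.map_smul, _root_.map_smul, map_add, _root_.map_smul, _root_.map_smul]
  refine (norm_add_le _ _).trans ?_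
  have h1 := ContinuousLinearMap.opNorm_smul_le a (LinearMap.toContinuousLinearMap (Matrix.toEuclideanLin X))
  have h2 := ContinuousLinearMap.opNorm_smul_le b (LinearMap.toContinuousLinearMap (Matrix.toEuclideanLin Y))
  simp only [Real.norm_eq_abs, abs_of_nonneg ha, abs_of_nonneg hb] at h1 h2
  exact add_le_add h1 h2

/-- **Gain bound through a linear inclusion of the reset map.**
If `Δᴮ` admits a linear inclusion with corners `M₁, …, M_k` on the ellipsoid
`{z : ‖R(z − ż)‖₂ ≤ ρ}`, then for every `z` in that ellipsoid,
`‖α₀(Δᴮ(z) − x*)‖₂ ≤ ‖α₀(Δᴮ(ż) − x*)‖₂ + (max_j ‖α₀ M_j R⁻¹‖₂→₂) ρ`. -/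
theorem reset_gain_bound {n k : ℕ} (hn : 2 ≤ n) (hk : 1 ≤ k)
    (α₀ : Matrix (Fin n) (Fin n) ℝ) (hα₀ : IsUnit α₀)
    (xs : Fin n → ℝ)
    (ΔB : (Fin (n - 1) → ℝ) → (Fin n → ℝ))
    (zc : Fin (n - 1) → ℝ)
    (R : Matrix (Fin (n - 1)) (Fin (n - 1)) ℝ) (hR : IsUnit R)
    (ρ : ℝ) (hρ : 0 ≤ ρ)
    (M : Fin k → Matrix (Fin n) (Fin (n - 1)) ℝ)
    (hM : ∀ z : Fin (n - 1) → ℝ, enorm2 (R.mulVec (z - zc)) ≤ ρ →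
      ∃ A ∈ convexHull ℝ (Set.range M), ΔB z - ΔB zc = A.mulVec (z - zc)) :
    ∀ z : Fin (n - 1) → ℝ, enorm2 (R.mulVec (z - zc)) ≤ ρ →
      enorm2 (α₀.mulVec (ΔB z - xs)) ≤
        enorm2 (α₀.mulVec (ΔB zc - xs))
          + (⨆ j : Fin k, opNorm2 (α₀ * M j * R⁻¹)) * ρ := by
  intro z hz
  obtain ⟨A, hA, hEq⟩ := hM z hz
  have : Nonempty (Fin k) := ⟨⟨0, hk⟩⟩
  set B := ⨆ j : Fin k, opNorm2 (α₀ * M j * R⁻¹) with hBdef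
  have hbdd : BddAbove (Set.range fun j : Fin k => opNorm2 (α₀ * M j * R⁻¹)) :=
    (Set.finite_range _).bddAbove
  have hconv : ∀ A' ∈ convexHull ℝ (Set.range M), opNorm2 (α₀ * A' * R⁻¹) ≤ B := by
    intro A' hA'
    refine convexHull_min (s := Set.range M)
        (t := {X : Matrix (Fin n) (Fin (n-1)) ℝ | opNorm2 (α₀ * X * R⁻¹) ≤ B}) ?_ ?_ hA'
    · rintro _ ⟨j, rfl⟩
      exact le_ciSup hbdd j
    · intro X hX Y hY a b ha hb hab
      simp only [Set.mem_setOf_eq] at hX hY ⊢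
      have hdist : α₀ * (a • X + b • Y) * R⁻¹
          = a • (α₀ * X * R⁻¹) + b • (α₀ * Y * R⁻¹) := by
        rw [Matrix.mul_add, Matrix.add_mul, Matrix.mul_smul, Matrix.mul_smul,
          Matrix.smul_mul, Matrix.smul_mul]
      rw [hdist]
      calc opNorm2 (a • (α₀ * X * R⁻¹) + b • (α₀ * Y * R⁻¹))
          ≤ a * opNorm2 (α₀ * X * R⁻¹) + b * opNorm2 (α₀ * Y * R⁻¹) :=
            opNorm2_convex _ _ ha hb
        _ ≤ a * B + b * B :=
            add_le_add (mul_le_mul_of_nonneg_left hX ha) (mul_le_mul_of_nonneg_left hY hb)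
        _ = B := by rw [← add_mul, hab, one_mul]
  have hAB : opNorm2 (α₀ * A * R⁻¹) ≤ B := hconv A hA
  have hB0 : 0 ≤ B := le_trans (opNorm2_nonneg _) hAB
  have hinv : R⁻¹ * R = 1 := Matrix.nonsing_inv_mul R ((Matrix.isUnit_iff_isUnit_det R).mp hR)
  have h2 : α₀.mulVec (A.mulVec (z - zc)) = (α₀ * A * R⁻¹).mulVec (R.mulVec (z - zc)) := by
    rw [Matrix.mulVec_mulVec, Matrix.mulVec_mulVec, Matrix.mul_assoc (α₀ * A) R⁻¹ R, hinv,
      Matrix.mul_one]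
  have h1 : α₀.mulVec (ΔB z - xs)
      = α₀.mulVec (ΔB zc - xs) + (α₀ * A * R⁻¹).mulVec (R.mulVec (z - zc)) := by
    rw [← h2, ← Matrix.mulVec_add]
    congr 1
    rw [← hEq]
    abel
  calc enorm2 (α₀.mulVec (ΔB z - xs))
      ≤ enorm2 (α₀.mulVec (ΔB zc - xs))
        + enorm2 ((α₀ * A * R⁻¹).mulVec (R.mulVec (z - zc))) := by
        rw [h1]; exact enorm2_add_le _ _
    _ ≤ enorm2 (α₀.mulVec (ΔB zc - xs)) + B * ρ := by
        refine add_le_add_right ?_ _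
        refine le_trans (enorm2_mulVec_le _ _) ?_
        exact mul_le_mul hAB hz (enorm2_nonneg _) hB0
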